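/- Fix β ∈ (0, π) and l_N > 0, and for λ ∈ (0, l_N/(1+sin β)) let ϑ_λ ∈ ((π+3β)/4, (π+β)/2) satisfy λ(1 + sin β/sin(2ϑ_λ − β)) = l_N. Define ϑ_B(λ) via cot ϑ_B(λ) = cot β − sin(2ϑ_λ − β)/(2 sin β · sin ϑ_λ · cos(ϑ_λ − β)), with ϑ_B(λ) ∈ (0, π). Then ϑ_λ + ϑ_B(λ) > (π + 3β)/2. -/

import Mathlib

open Real

private lemma key0 (u h : ℝ) :
    cos (2*h) * sin u * cos (u - 2*h) * cos (u - 3*h)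
      - sin (2*u - 2*h) * cos (u - 3*h) / 2
      - sin (2*h) * sin u * cos (u - 2*h) * sin (u - 3*h)
    = cos (u - h) * cos (2*u - 3*h) * sin h := by
  simp only [sin_sub, cos_sub, sin_two_mul, cos_two_mul, sin_three_mul, cos_three_mul]
  linear_combination
    (6*cos u*sin h - 18*cos u*sin h*cos h^2 + 12*cos u*sin h*cos h^4
      - 14*cos u*sin h^3 + 36*cos u*sin h^3*cos h^2 - 16*cos u*sin h^3*cos h^4
      + 8*cos u*sin h^5 - 16*cos u*sin h^5*cos h^2
      - 6*sin u*sin h^2*cos h + 24*sin u*sin h^2*cos h^3 - 16*sin u*sin h^2*cos h^5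
      + 8*sin u*sin h^4*cos h - 16*sin u*sin h^4*cos h^3) * sin_sq_add_cos_sq u
    + (-6*cos u*sin h + 12*cos u*sin h*cos h^2 + 8*cos u*sin h^3
      - 16*cos u*sin h^3*cos h^2 + 6*cos u^3*sin h - 12*cos u^3*sin h*cos h^2
      - 8*cos u^3*sin h^3 + 16*cos u^3*sin h^3*cos h^2
      + 12*sin u*sin h^2*cos h - 16*sin u*sin h^2*cos h^3
      + 6*sin u*cos u^2*cos h - 20*sin u*cos u^2*cos h^3
      + 16*sin u*cos u^2*cos h^5) * sin_sq_add_cos_sq h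

private lemma cot_anti {a b : ℝ} (ha : a ∈ Set.Ioo 0 π) (hb : b ∈ Set.Ioo 0 π)
    (h : cos b / sin b < cos a / sin a) : a < b := by
  have sa : 0 < sin a := sin_pos_of_pos_of_lt_pi ha.1 ha.2
  have sb : 0 < sin b := sin_pos_of_pos_of_lt_pi hb.1 hb.2
  by_contra hba
  push_neg at hba
  have hsin : sin (b - a) ≤ 0 := by
    apply sin_nonpos_of_nonpos_of_neg_pi_le
    · linarith [ha.1, ha.2, hb.1, hb.2]
    · linarith [ha.1, ha.2, hb.1, hb.2]
  rw [sin_sub] at hsin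
  rw [div_lt_div_iff₀ sb sa] at h
  nlinarith

/-- If `ϑ_λ ∈ ((π+3β)/4, (π+β)/2)` satisfies `λ(1 + sin β/sin(2ϑ_λ−β)) = l_N` and
`ϑ_B ∈ (0, π)` is defined by
`cot ϑ_B = cot β − sin(2ϑ_λ−β)/(2 sin β sin ϑ_λ cos(ϑ_λ−β))`, then
`ϑ_λ + ϑ_B > (π+3β)/2`. -/
theorem stmt15 (β lN lam ϑlam ϑB : ℝ) (hβ : 0 < β) (hβπ : β < π) (hlN : 0 < lN)
    (hlam : lam ∈ Set.Ioo 0 (lN / (1 + sin β)))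
    (hϑlam : ϑlam ∈ Set.Ioo ((π + 3 * β) / 4) ((π + β) / 2))
    (heq : lam * (1 + sin β / sin (2 * ϑlam - β)) = lN)
    (hϑB : ϑB ∈ Set.Ioo 0 π)
    (hcot : cos ϑB / sin ϑB =
      cos β / sin β -
        sin (2 * ϑlam - β) / (2 * sin β * sin ϑlam * cos (ϑlam - β))) :
    (π + 3 * β) / 2 < ϑlam + ϑB := by
  obtain ⟨hu1, hu2⟩ := hϑlam
  have hπ : (0:ℝ) < π := pi_pos
  -- basic sign facts
  have hsβ : 0 < sin β := sin_pos_of_pos_of_lt_pi hβ hβπ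
  have hsu : 0 < sin ϑlam := sin_pos_of_pos_of_lt_pi (by linarith) (by linarith)
  have hc1 : 0 < cos (ϑlam - β) :=
    cos_pos_of_mem_Ioo ⟨by linarith, by linarith⟩
  have hcx : 0 < cos (ϑlam - 3 * (β/2)) :=
    cos_pos_of_mem_Ioo ⟨by linarith, by linarith⟩
  have hsh : 0 < sin (β/2) := sin_pos_of_pos_of_lt_pi (by linarith) (by linarith)
  have hch : 0 < cos (ϑlam - β/2) :=
    cos_pos_of_mem_Ioo ⟨by linarith, by linarith⟩
  have hc2 : cos (2*ϑlam - 3*(β/2)) < 0 := by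
    apply cos_neg_of_pi_div_two_lt_of_lt <;> nlinarith
  -- the key identity, specialized
  have hkey := key0 ϑlam (β/2)
  rw [show 2*(β/2) = β by ring] at hkey
  set x := ϑlam - 3*(β/2) with hx
  set sb := sin β
  set cb := cos β
  set su := sin ϑlam
  set c1 := cos (ϑlam - β)
  set s2 := sin (2 * ϑlam - β)
  set sx := sin x
  set cx := cos x
  set ch := cos (ϑlam - β/2)
  set c2a := cos (2*ϑlam - 3*(β/2))
  set sh := sin (β/2)
  -- cot ϑB < sx / cx
  have hlt : cos ϑB / sin ϑB < sx / cx := by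
    rw [hcot, ← sub_neg]
    have hD : 0 < 2 * sb * su * c1 * cx := by positivity
    have hid : (cb / sb - s2 / (2 * sb * su * c1) - sx / cx)
          * (2 * sb * su * c1 * cx) = 2 * (ch * c2a * sh) := by
      rw [← hkey]
      field_simp
    have hN : 2 * (ch * c2a * sh) < 0 := by
      nlinarith [mul_neg_of_pos_of_neg (mul_pos hch hsh) hc2]
    by_contra hcon
    push_neg at hcon
    nlinarith [hid, hN, hD, mul_nonneg hcon hD.le]
  -- rewrite sx / cx as cot of φ = π/2 - x
  have hφcos : cos ((π + 3*β)/2 - ϑlam) = sx := by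
    rw [show (π + 3*β)/2 - ϑlam = π/2 - x by rw [hx]; ring, cos_pi_div_two_sub]
  have hφsin : sin ((π + 3*β)/2 - ϑlam) = cx := by
    rw [show (π + 3*β)/2 - ϑlam = π/2 - x by rw [hx]; ring, sin_pi_div_two_sub]
  have hφmem : (π + 3*β)/2 - ϑlam ∈ Set.Ioo 0 π := ⟨by linarith, by linarith⟩
  have := cot_anti hφmem hϑB (by rw [hφcos, hφsin]; exact hlt)
  linarith
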